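/- Let G > 0, let f be the Huber cost with threshold G, and consider the SGD iterates x_{t+1} = x_t - α_t(∇f(x_t) + z_t) with deterministic initialization satisfying 0 < ‖x₁‖ ≤ G, step-size α_t = 1/(2√(t+1)), and i.i.d. noise z_t ∈ {x₁, -x₁} each with probability 1/2. Then for any ε ∈ (0, ‖x₁‖²) and every t ≥ 1, P(min_{k∈[t]} ‖∇f(x_k)‖² > ε) ≥ 2·e^{-t·ln 2}. -/

import Mathlib

open MeasureTheory
open ENNReal

/-- Gradient of the Huber cost with threshold `G`. -/
noncomputable def huberGrad {d : ℕ} (G : ℝ) (x : EuclideanSpace ℝ (Fin d)) :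
    EuclideanSpace ℝ (Fin d) :=
  if ‖x‖ ≤ G then x else (G / ‖x‖) • x

theorem sgd_tail_probability_lower_bound
    {Ω : Type*} [MeasurableSpace Ω] {μ : Measure Ω} [IsProbabilityMeasure μ]
    {d : ℕ} (G : ℝ) (hG : 0 < G)
    (x₁ : EuclideanSpace ℝ (Fin d)) (hx₁ : 0 < ‖x₁‖) (hx₁G : ‖x₁‖ ≤ G)
    (z : ℕ → Ω → EuclideanSpace ℝ (Fin d))
    (hzmeas : ∀ t, Measurable (z t))
    (hindep : ProbabilityTheory.iIndepFun z μ)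
    (hdist : ∀ t, 1 ≤ t →
      μ {ω | z t ω = x₁} = 1 / 2 ∧ μ {ω | z t ω = -x₁} = 1 / 2)
    (X : ℕ → Ω → EuclideanSpace ℝ (Fin d))
    (hX1 : ∀ ω, X 1 ω = x₁)
    (hrec : ∀ t, 1 ≤ t → ∀ ω,
      X (t + 1) ω = X t ω - (1 / (2 * Real.sqrt (t + 1))) • (huberGrad G (X t ω) + z t ω))
    (ε : ℝ) (hε : 0 < ε) (hε' : ε < ‖x₁‖ ^ 2) :
    ∀ t, 1 ≤ t →
      2 * Real.exp (-(t : ℝ) * Real.log 2) ≤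
        (μ {ω | ∀ k : ℕ, 1 ≤ k → k ≤ t → ε < ‖huberGrad G (X k ω)‖ ^ 2}).toReal := by
  intro t ht
  have ht0 : (0 : ℝ) ≤ t := by linarith
  set E : Set Ω := {ω | ∀ k : ℕ, 1 ≤ k → (k : ℝ) ≤ t → ε < ‖huberGrad G (X k ω)‖ ^ 2}
    with hE
  obtain ⟨m, hm⟩ : ∃ m : ℕ, ⌊t⌋₊ = m + 1 := by
    have : 1 ≤ ⌊t⌋₊ := Nat.le_floor (by exact_mod_cast ht)
    exact ⟨⌊t⌋₊ - 1, by omega⟩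
  have hgx₁ : huberGrad G x₁ = x₁ := by simp [huberGrad, hx₁G]
  -- the event that all noises are -x₁
  set A : Set Ω := ⋂ j ∈ Finset.Icc 1 m, {ω | z j ω = -x₁} with hA
  have hmeasA : μ A = (1 / 2 : ℝ≥0∞) ^ m := by
    have key := hindep.meas_biInter (S := Finset.Icc 1 m)
      (s := fun j => {ω | z j ω = -x₁})
      (fun j hj => ⟨{-x₁}, measurableSet_singleton _, rfl⟩)
    rw [hA, key, Finset.prod_congr rfl
      (fun j hj => (hdist j (Finset.mem_Icc.mp hj).1).2),
      Finset.prod_const, Nat.card_Icc]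
    simp
  -- on A, iterates stay at x₁
  have hsub : A ⊆ E := by
    intro ω hω
    have hz : ∀ j ∈ Finset.Icc 1 m, z j ω = -x₁ := fun j hj =>
      Set.mem_iInter₂.mp hω j hj
    have hXk : ∀ k : ℕ, 1 ≤ k → k ≤ m + 1 → X k ω = x₁ := by
      intro k
      induction k with
      | zero => omega
      | succ l ih =>
        intro _ hl
        rcases Nat.eq_zero_or_pos l with hl0 | hl1
        · subst hl0; exact hX1 ω
        · have hXl : X l ω = x₁ := ih hl1 (by omega)
          have hzl : z l ω = -x₁ := hz l (Finset.mem_Icc.mpr ⟨hl1, by omega⟩)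
          rw [hrec l hl1 ω, hXl, hgx₁, hzl]
          simp
    intro k hk1 hk2
    have hkle : k ≤ m + 1 := by
      rw [← hm]; exact Nat.le_floor hk2
    rw [hXk k hk1 hkle, hgx₁]
    exact hε'
  have hle : ((1 / 2 : ℝ≥0∞) ^ m).toReal ≤ (μ E).toReal := by
    rw [← hmeasA]
    exact ENNReal.toReal_mono (measure_ne_top μ _) (measure_mono hsub)
  have htoReal : ((1 / 2 : ℝ≥0∞) ^ m).toReal = (1 / 2 : ℝ) ^ m := by
    simp [ENNReal.toReal_pow]
  -- arithmetic for the left side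
  have harith : 2 * Real.exp (-((m + 1 : ℕ) : ℝ) * Real.log 2) = (1 / 2 : ℝ) ^ m := by
    have h1 : -((m + 1 : ℕ) : ℝ) * Real.log 2 = ((m + 1 : ℕ) : ℝ) * (-Real.log 2) := by ring
    rw [h1, Real.exp_nat_mul, Real.exp_neg, Real.exp_log (by norm_num : (0:ℝ) < 2),
      pow_succ]
    ring
  have hmt : ((m + 1 : ℕ) : ℝ) ≤ t := by
    rw [← hm]; exact Nat.floor_le ht0
  have hmono2 : 2 * Real.exp (-t * Real.log 2) ≤
      2 * Real.exp (-((m + 1 : ℕ) : ℝ) * Real.log 2) := by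
    have hlog : 0 < Real.log 2 := Real.log_pos (by norm_num)
    have h2 : Real.exp (-t * Real.log 2) ≤ Real.exp (-((m + 1 : ℕ) : ℝ) * Real.log 2) :=
      Real.exp_le_exp.mpr (by nlinarith)
    linarith
  calc 2 * Real.exp (-t * Real.log 2)
      ≤ 2 * Real.exp (-((m + 1 : ℕ) : ℝ) * Real.log 2) := hmono2
    _ = (1 / 2 : ℝ) ^ m := harith
    _ = ((1 / 2 : ℝ≥0∞) ^ m).toReal := htoReal.symm
    _ ≤ (μ E).toReal := hle
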